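/- arXiv:2509.02557 — 4 statements merged into one kernel-verified Lean document; each statement's English description precedes it below -/
import Mathlib

section
/- Let P be a regular power series method, let (x_j) be a real sequence and L ∈ ℝ. Then (x_j) is P-statistically convergent to L if and only if there exists a subset E ⊆ ℕ such that the P-density δ_P(E) exists and equals 0, and the sequence (x_j) converges to L along the complement of E, i.e., for every ε > 0 there exists N such that |x_j − L| < ε for all j ≥ N with j ∉ E. -/
open Filter Topology
open scoped ENNReal

/-- A power series method `P`: a sequence `(s j)` of nonnegative reals with `s 0 > 0`
whose power series `s(t) = ∑ s j * t ^ j` has radius of convergence `R`, `0 < R ≤ ∞`. -/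
structure PowerSeriesMethod where
  s : ℕ → ℝ
  s_nonneg : ∀ j, 0 ≤ s j
  s0_pos : 0 < s 0
  R : ℝ≥0∞
  R_pos : 0 < R
  summable_of_lt : ∀ t : ℝ, 0 < t → ENNReal.ofReal t < R → Summable fun j => s j * t ^ j
  not_summable_of_gt : ∀ t : ℝ, R < ENNReal.ofReal t → ¬ Summable fun j => s j * t ^ j

namespace PowerSeriesMethod

/-- The filter of `t` tending to `R` from the left (through `0 < t < R`);
if `R = ∞` this is `atTop`. -/
noncomputable def limFilter (P : PowerSeriesMethod) : Filter ℝ :=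
  if P.R = ⊤ then Filter.atTop else nhdsWithin P.R.toReal (Set.Ioo 0 P.R.toReal)

/-- `s(t) = ∑ s j t ^ j`. -/
noncomputable def sum (P : PowerSeriesMethod) (t : ℝ) : ℝ := ∑' j, P.s j * t ^ j

/-- The quotient `(∑_{j ∈ E} s j t ^ j) / s(t)` whose limit as `t → R⁻` is the `P`-density. -/
noncomputable def densityFn (P : PowerSeriesMethod) (E : Set ℕ) (t : ℝ) : ℝ :=
  (∑' j, Set.indicator E (fun j => P.s j * t ^ j) j) / P.sum t

/-- `E ⊆ ℕ` has `P`-density `d`. -/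
def HasDensity (P : PowerSeriesMethod) (E : Set ℕ) (d : ℝ) : Prop :=
  Tendsto (P.densityFn E) P.limFilter (𝓝 d)

/-- The power series method `P` is regular. -/
def Regular (P : PowerSeriesMethod) : Prop :=
  ∀ j, Tendsto (fun t => P.s j * t ^ j / P.sum t) P.limFilter (𝓝 0)

/-- The sequence `x` is `P`-statistically convergent to `L`. -/
def StatTendsto (P : PowerSeriesMethod) (x : ℕ → ℝ) (L : ℝ) : Prop :=
  ∀ ε : ℝ, 0 < ε → P.HasDensity {j | ε ≤ |x j - L|} 0

end PowerSeriesMethod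

namespace PowerSeriesMethod

variable (P : PowerSeriesMethod)

lemma term_nonneg {t : ℝ} (ht : 0 ≤ t) (j : ℕ) : 0 ≤ P.s j * t ^ j :=
  mul_nonneg (P.s_nonneg j) (pow_nonneg ht j)

lemma summable_dom {t : ℝ} (h1 : 0 < t) (h2 : ENNReal.ofReal t < P.R) :
    Summable fun j => P.s j * t ^ j := P.summable_of_lt t h1 h2

lemma s0_le_sum {t : ℝ} (h1 : 0 < t) (h2 : ENNReal.ofReal t < P.R) : P.s 0 ≤ P.sum t := by
  have h := Summable.le_tsum (P.summable_dom h1 h2) 0 (fun j _ => P.term_nonneg h1.le j)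
  simpa [sum] using h

lemma sum_pos {t : ℝ} (h1 : 0 < t) (h2 : ENNReal.ofReal t < P.R) : 0 < P.sum t :=
  lt_of_lt_of_le P.s0_pos (P.s0_le_sum h1 h2)

lemma summable_indicator {t : ℝ} (h1 : 0 < t) (h2 : ENNReal.ofReal t < P.R) (E : Set ℕ) :
    Summable (E.indicator fun j => P.s j * t ^ j) :=
  (P.summable_dom h1 h2).indicator E

lemma densityFn_nonneg {t : ℝ} (h1 : 0 < t) (h2 : ENNReal.ofReal t < P.R) (E : Set ℕ) :
    0 ≤ P.densityFn E t :=
  div_nonneg (tsum_nonneg fun j => Set.indicator_nonneg (fun j _ => P.term_nonneg h1.le j) j)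
    (P.sum_pos h1 h2).le

lemma densityFn_mono {t : ℝ} (h1 : 0 < t) (h2 : ENNReal.ofReal t < P.R) {E F : Set ℕ}
    (hEF : E ⊆ F) : P.densityFn E t ≤ P.densityFn F t := by
  apply div_le_div_of_nonneg_right ?_ (P.sum_pos h1 h2).le
  exact Summable.tsum_le_tsum
    (fun j => Set.indicator_le_indicator_of_subset hEF (fun j => P.term_nonneg h1.le j) j)
    (P.summable_indicator h1 h2 E) (P.summable_indicator h1 h2 F)

lemma densityFn_union_le {t : ℝ} (h1 : 0 < t) (h2 : ENNReal.ofReal t < P.R) (A B : Set ℕ) :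
    P.densityFn (A ∪ B) t ≤ P.densityFn A t + P.densityFn B t := by
  rw [densityFn, densityFn, densityFn, ← add_div]
  apply div_le_div_of_nonneg_right ?_ (P.sum_pos h1 h2).le
  rw [← Summable.tsum_add (P.summable_indicator h1 h2 A) (P.summable_indicator h1 h2 B)]
  refine Summable.tsum_le_tsum (fun j => ?_) (P.summable_indicator h1 h2 _)
    ((P.summable_indicator h1 h2 A).add (P.summable_indicator h1 h2 B))
  classical
  have hnn : ∀ (S : Set ℕ), 0 ≤ S.indicator (fun j => P.s j * t ^ j) j :=
    fun S => Set.indicator_nonneg (fun j _ => P.term_nonneg h1.le j) j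
  by_cases hA : j ∈ A
  · rw [Set.indicator_of_mem (Set.mem_union_left _ hA), Set.indicator_of_mem hA]
    exact le_add_of_nonneg_right (hnn B)
  by_cases hB : j ∈ B
  · rw [Set.indicator_of_mem (Set.mem_union_right _ hB), Set.indicator_of_mem hB,
      Set.indicator_of_notMem hA, zero_add]
  · rw [Set.indicator_of_notMem hA, Set.indicator_of_notMem hB,
      Set.indicator_of_notMem (by simp [hA, hB]), add_zero]

lemma eventually_dom : ∀ᶠ t in P.limFilter, 0 < t ∧ ENNReal.ofReal t < P.R := by
  rw [limFilter]
  split_ifs with h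
  · filter_upwards [eventually_gt_atTop (0:ℝ)] with t ht
    exact ⟨ht, h ▸ ENNReal.ofReal_lt_top⟩
  · filter_upwards [eventually_mem_nhdsWithin] with t ht
    exact ⟨ht.1, (ENNReal.ofReal_lt_iff_lt_toReal ht.1.le h).2 ht.2⟩

lemma Ioi_mem_limFilter {u : ℝ} (hu : ENNReal.ofReal u < P.R) : Set.Ioi u ∈ P.limFilter := by
  rw [limFilter]
  split_ifs with h
  · exact Ioi_mem_atTop u
  · refine mem_nhdsWithin_of_mem_nhds (Ioi_mem_nhds ?_)
    rcases le_or_gt u 0 with hu0 | hu0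
    · exact lt_of_le_of_lt hu0 (ENNReal.toReal_pos P.R_pos.ne' h)
    · exact (ENNReal.ofReal_lt_iff_lt_toReal hu0.le h).1 hu

lemma tsum_indicator_Iio (f : ℕ → ℝ) (N : ℕ) :
    (∑' j, Set.indicator {j : ℕ | j < N} f j) = ∑ j ∈ Finset.range N, f j := by
  rw [tsum_eq_sum (s := Finset.range N) (fun b hb => Set.indicator_of_notMem
    (by simpa using hb) f)]
  exact Finset.sum_congr rfl fun j hj => Set.indicator_of_mem (by simpa using hj) f

lemma hasDensity_Iio (hP : P.Regular) (N : ℕ) : P.HasDensity {j : ℕ | j < N} 0 := by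
  have : P.densityFn {j : ℕ | j < N} = fun t => ∑ j ∈ Finset.range N, P.s j * t ^ j / P.sum t := by
    funext t
    rw [densityFn, tsum_indicator_Iio, Finset.sum_div]
  rw [HasDensity, this]
  have h0 : (0:ℝ) = ∑ j ∈ Finset.range N, (0:ℝ) := by simp
  rw [h0]
  exact tendsto_finset_sum _ fun j _ => hP j

lemma tsum_indicator_Ici {t : ℝ} (h1 : 0 < t) (h2 : ENNReal.ofReal t < P.R) (N : ℕ) :
    (∑' j, Set.indicator {j : ℕ | N ≤ j} (fun j => P.s j * t ^ j) j) =
      P.sum t - ∑ j ∈ Finset.range N, P.s j * t ^ j := by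
  have key : ∀ j, Set.indicator {j : ℕ | N ≤ j} (fun j => P.s j * t ^ j) j =
      P.s j * t ^ j - Set.indicator {j : ℕ | j < N} (fun j => P.s j * t ^ j) j := by
    intro j
    rcases lt_or_ge j N with h | h
    · rw [Set.indicator_of_notMem (by simpa using h), Set.indicator_of_mem (by simpa using h)]
      ring
    · rw [Set.indicator_of_mem (by simpa using h), Set.indicator_of_notMem (by simp [Nat.not_lt.2 h])]
      ring
  calc (∑' j, Set.indicator {j : ℕ | N ≤ j} (fun j => P.s j * t ^ j) j)
      = ∑' j, (P.s j * t ^ j - Set.indicator {j : ℕ | j < N} (fun j => P.s j * t ^ j) j) := by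
        exact tsum_congr key
    _ = P.sum t - ∑ j ∈ Finset.range N, P.s j * t ^ j := by
        rw [Summable.tsum_sub (P.summable_dom h1 h2) (P.summable_indicator h1 h2 _),
          tsum_indicator_Iio, sum]

lemma tendsto_tail {u : ℝ} (h1 : 0 < u) (h2 : ENNReal.ofReal u < P.R) :
    Tendsto (fun N => ∑' j, Set.indicator {j : ℕ | N ≤ j} (fun j => P.s j * u ^ j) j)
      atTop (𝓝 0) := by
  have : (fun N => ∑' j, Set.indicator {j : ℕ | N ≤ j} (fun j => P.s j * u ^ j) j) =
      fun N => P.sum u - ∑ j ∈ Finset.range N, P.s j * u ^ j := by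
    funext N; exact P.tsum_indicator_Ici h1 h2 N
  rw [this]
  have := tendsto_const_nhds (x := P.sum u) (f := atTop (α := ℕ)) |>.sub
    (P.summable_dom h1 h2).hasSum.tendsto_sum_nat
  simpa [sum] using this

lemma densityFn_Ici_le {t u : ℝ} (h1 : 0 < t) (h2 : ENNReal.ofReal t < P.R)
    (hu2 : ENNReal.ofReal u < P.R) (htu : t ≤ u) (N : ℕ) :
    P.densityFn {j : ℕ | N ≤ j} t ≤
      (∑' j, Set.indicator {j : ℕ | N ≤ j} (fun j => P.s j * u ^ j) j) / P.s 0 := by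
  have hu1 : 0 < u := h1.trans_le htu
  have hA : (∑' j, Set.indicator {j : ℕ | N ≤ j} (fun j => P.s j * t ^ j) j) ≤
      ∑' j, Set.indicator {j : ℕ | N ≤ j} (fun j => P.s j * u ^ j) j := by
    refine Summable.tsum_le_tsum (fun j => ?_) (P.summable_indicator h1 h2 _)
      (P.summable_indicator hu1 hu2 _)
    apply Set.indicator_le_indicator
    exact mul_le_mul_of_nonneg_left (pow_le_pow_left₀ h1.le htu j) (P.s_nonneg j)
  refine div_le_div₀ (tsum_nonneg fun j => Set.indicator_nonneg
      (fun j _ => P.term_nonneg hu1.le j) j) hA P.s0_pos (P.s0_le_sum h1 h2)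

lemma exists_approx_seq : ∃ c : ℕ → ℝ, (∀ m, 0 < c m ∧ ENNReal.ofReal (c m) < P.R) ∧
    ∀ t : ℝ, 0 < t → ENNReal.ofReal t < P.R → ∃ M : ℕ, ∀ m, M ≤ m → t ≤ c m := by
  by_cases h : P.R = ⊤
  · refine ⟨fun m => (m : ℝ) + 1, fun m => ⟨by positivity, h ▸ ENNReal.ofReal_lt_top⟩,
      fun t ht _ => ⟨⌈t⌉₊, fun m hm => ?_⟩⟩
    calc t ≤ (⌈t⌉₊ : ℝ) := Nat.le_ceil t
      _ ≤ (m : ℝ) := by exact_mod_cast hm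
      _ ≤ (m : ℝ) + 1 := by linarith
  · set R₀ := P.R.toReal with hR₀
    have hR₀pos : 0 < R₀ := ENNReal.toReal_pos P.R_pos.ne' h
    refine ⟨fun m => R₀ - R₀ / (m + 2), fun m => ⟨?_, ?_⟩, fun t ht htR => ?_⟩
    · have h2 : R₀ / (m + 2) < R₀ := by
        apply div_lt_self hR₀pos; push_cast; linarith
      linarith
    · have h2 : R₀ / (m + 2) < R₀ := by
        apply div_lt_self hR₀pos; push_cast; linarith
      rw [ENNReal.ofReal_lt_iff_lt_toReal (by linarith) h]
      have : 0 < R₀ / ((m : ℝ) + 2) := by positivity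
      linarith
    · have htR' : t < R₀ := (ENNReal.ofReal_lt_iff_lt_toReal ht.le h).1 htR
      obtain ⟨M, hM⟩ := exists_nat_gt (R₀ / (R₀ - t))
      refine ⟨M, fun m hm => ?_⟩
      have h1 : R₀ / (R₀ - t) < (m : ℝ) + 2 := by
        calc R₀ / (R₀ - t) < (M : ℝ) := hM
          _ ≤ (m : ℝ) := by exact_mod_cast hm
          _ ≤ (m : ℝ) + 2 := by linarith
      have h2 : R₀ / ((m : ℝ) + 2) < R₀ - t := by
        rw [div_lt_iff₀ (by positivity)]
        rw [div_lt_iff₀ (by linarith)] at h1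
        linarith [mul_comm (R₀ - t) ((m:ℝ) + 2)]
      linarith

lemma exists_threshold (S : Set ℝ) (hS : S ∈ P.limFilter) {c : ℝ} (hc1 : 0 < c)
    (hc2 : ENNReal.ofReal c < P.R) :
    ∃ v : ℝ, c ≤ v ∧ 0 < v ∧ ENNReal.ofReal v < P.R ∧
      ∀ t : ℝ, 0 < t → ENNReal.ofReal t < P.R → v < t → t ∈ S := by
  rw [limFilter] at hS
  split_ifs at hS with h
  · obtain ⟨a, ha⟩ := mem_atTop_sets.1 hS
    refine ⟨max c a, le_max_left _ _, lt_of_lt_of_le hc1 (le_max_left _ _),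
      h ▸ ENNReal.ofReal_lt_top, fun t _ _ hvt => ha t (le_of_lt (lt_of_le_of_lt (le_max_right _ _) hvt))⟩
  · set R₀ := P.R.toReal with hR₀
    have hR₀pos : 0 < R₀ := ENNReal.toReal_pos P.R_pos.ne' h
    obtain ⟨ε, hε, hball⟩ := Metric.mem_nhdsWithin_iff.1 hS
    have hcR : c < R₀ := (ENNReal.ofReal_lt_iff_lt_toReal hc1.le h).1 hc2
    refine ⟨max c (R₀ - ε), le_max_left _ _, lt_of_lt_of_le hc1 (le_max_left _ _), ?_, ?_⟩
    · rw [ENNReal.ofReal_lt_iff_lt_toReal (le_trans hc1.le (le_max_left _ _)) h]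
      exact max_lt hcR (by linarith)
    · intro t ht htR hvt
      have htR' : t < R₀ := (ENNReal.ofReal_lt_iff_lt_toReal ht.le h).1 htR
      apply hball
      constructor
      · rw [Metric.mem_ball, Real.dist_eq, abs_of_nonpos (by linarith)]
        have : R₀ - ε < t := lt_of_le_of_lt (le_max_right _ _) hvt
        linarith
      · exact ⟨ht, htR'⟩

end PowerSeriesMethod

lemma exists_interval_of_strictMono (N : ℕ → ℕ) (hN : StrictMono N) {k j : ℕ}
    (hj : N k ≤ j) : ∃ m, k ≤ m ∧ N m ≤ j ∧ j < N (m + 1) := by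
  classical
  have hkj : k ≤ j := le_trans hN.le_apply hj
  refine ⟨Nat.findGreatest (fun m => N m ≤ j) j,
    Nat.le_findGreatest (P := fun m => N m ≤ j) hkj hj,
    Nat.findGreatest_spec (P := fun m => N m ≤ j) hkj hj, ?_⟩
  by_cases hle : Nat.findGreatest (fun m => N m ≤ j) j + 1 ≤ j
  · exact lt_of_not_ge
      (Nat.findGreatest_is_greatest (P := fun m => N m ≤ j) (Nat.lt_succ_self _) hle)
  · have hjm : j ≤ Nat.findGreatest (fun m => N m ≤ j) j := by omega
    exact lt_of_le_of_lt hjm (lt_of_lt_of_le (Nat.lt_succ_self _) hN.le_apply)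

/-- `(x j)` is `P`-statistically convergent to `L` iff there is `E ⊆ ℕ`
with `P`-density `0` such that `x` converges to `L` along the complement of `E`. -/
theorem pstat_iff_exists_density_zero_subseq (P : PowerSeriesMethod) (hP : P.Regular)
    (x : ℕ → ℝ) (L : ℝ) :
    P.StatTendsto x L ↔
      ∃ E : Set ℕ, P.HasDensity E 0 ∧
        ∀ ε : ℝ, 0 < ε → ∃ N : ℕ, ∀ j : ℕ, N ≤ j → j ∉ E → |x j - L| < ε := by
  classical
  constructor
  · intro hx
    set F : ℕ → Set ℕ := fun m => {j | 1 / ((m : ℝ) + 1) ≤ |x j - L|} with hF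
    have hFd : ∀ m, P.HasDensity (F m) 0 := by
      intro m
      have hpos : (0:ℝ) < 1 / ((m : ℝ) + 1) := by positivity
      exact hx _ hpos
    have hFmono : ∀ {m m' : ℕ}, m ≤ m' → F m ⊆ F m' := by
      intro m m' hmm j hj
      have hj' : 1 / ((m : ℝ) + 1) ≤ |x j - L| := hj
      show 1 / ((m' : ℝ) + 1) ≤ |x j - L|
      have hmm' : (m : ℝ) ≤ (m' : ℝ) := by exact_mod_cast hmm
      have h1 := one_div_le_one_div_of_le (show (0:ℝ) < (m : ℝ) + 1 by positivity)
        (show (m : ℝ) + 1 ≤ (m' : ℝ) + 1 by linarith)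
      linarith
    obtain ⟨c, hc, hcesc⟩ := P.exists_approx_seq
    have hSmem : ∀ m : ℕ, {t | P.densityFn (F m) t < 1 / ((m : ℝ) + 1)} ∈ P.limFilter :=
      fun m => Filter.eventually_iff.mp ((hFd m).eventually (gt_mem_nhds (by positivity)))
    choose v hvc hv1 hv2 hvS using
      fun m => P.exists_threshold _ (hSmem m) (hc m).1 (hc m).2
    have htail : ∀ m : ℕ, ∃ N₀ : ℕ, ∀ n, N₀ ≤ n →
        (∑' j, Set.indicator {j : ℕ | n ≤ j} (fun j => P.s j * (v m) ^ j) j) <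
          P.s 0 / ((m : ℝ) + 1) := by
      intro m
      exact eventually_atTop.1 ((P.tendsto_tail (hv1 m) (hv2 m)).eventually
        (gt_mem_nhds (div_pos P.s0_pos (by positivity))))
    choose N₀ hN₀ using htail
    let N : ℕ → ℕ := fun m => Nat.rec (motive := fun _ => ℕ) (N₀ 0) (fun m prev => max (prev + 1) (N₀ (m + 1))) m
    have hNsucc : ∀ m, N m < N (m + 1) := fun m =>
      lt_of_lt_of_le (Nat.lt_succ_self _) (le_max_left _ _)
    have hNmono : StrictMono N := strictMono_nat_of_lt_succ hNsucc
    have hNtail : ∀ m, N₀ m ≤ N m := by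
      intro m
      cases m with
      | zero => exact le_refl _
      | succ m => exact le_max_right _ _
    set E : Set ℕ := {j | ∃ m, j ∈ F m ∧ N m ≤ j ∧ j < N (m + 1)} with hE
    refine ⟨E, ?_, ?_⟩
    · rw [PowerSeriesMethod.HasDensity, Metric.tendsto_nhds]
      intro ε εpos
      obtain ⟨k, hk⟩ := exists_nat_one_div_lt (half_pos εpos)
      filter_upwards [P.eventually_dom, P.Ioi_mem_limFilter (hv2 k)] with t ht htv
      obtain ⟨ht1, ht2⟩ := ht
      obtain ⟨M, hM⟩ := hcesc t ht1 ht2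
      set n := max k M with hn
      set m := Nat.findGreatest (fun m => v m < t) n with hm
      have hPk : v k < t := htv
      have hkn : k ≤ n := le_max_left _ _
      have hmspec : v m < t := Nat.findGreatest_spec (P := fun m => v m < t) hkn hPk
      have hkm : k ≤ m := Nat.le_findGreatest (P := fun m => v m < t) hkn hPk
      have hmt : t ≤ v (m + 1) := by
        by_cases hle : m + 1 ≤ n
        · exact le_of_not_gt (Nat.findGreatest_is_greatest (Nat.lt_succ_self _) hle)
        · have hMm : M ≤ m + 1 := by
            have := le_of_not_ge (fun hcon => hle (le_trans hcon (le_refl n)))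
            omega
          exact le_trans (hM (m + 1) hMm) (hvc (m + 1))
      have hEsub : E ⊆ F m ∪ {j | N (m + 1) ≤ j} := by
        rintro j ⟨m', hjF, hjN, _⟩
        rcases le_or_gt m' m with hmm | hmm
        · exact Or.inl (hFmono hmm hjF)
        · exact Or.inr (le_trans (hNmono.monotone hmm) hjN)
      have h1 : P.densityFn E t ≤ P.densityFn (F m) t + P.densityFn {j | N (m + 1) ≤ j} t :=
        le_trans (P.densityFn_mono ht1 ht2 hEsub) (P.densityFn_union_le ht1 ht2 _ _)
      have h2 : P.densityFn (F m) t < 1 / ((m : ℝ) + 1) := hvS m t ht1 ht2 hmspec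
      have h3 : P.densityFn {j : ℕ | N (m + 1) ≤ j} t < 1 / ((m : ℝ) + 2) := by
        have hb := P.densityFn_Ici_le ht1 ht2 (hv2 (m + 1)) hmt (N (m + 1))
        have htl := hN₀ (m + 1) (N (m + 1)) (hNtail (m + 1))
        have hcast : ((m + 1 : ℕ) : ℝ) + 1 = (m : ℝ) + 2 := by push_cast; ring
        rw [hcast] at htl
        refine lt_of_le_of_lt hb ?_
        rw [div_lt_iff₀ P.s0_pos, one_div, inv_mul_eq_div]
        exact htl
      have hnn := P.densityFn_nonneg ht1 ht2 E
      rw [Real.dist_eq, sub_zero, abs_of_nonneg hnn]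
      have hkmR : (k : ℝ) ≤ (m : ℝ) := by exact_mod_cast hkm
      have e1 : 1 / ((m : ℝ) + 1) ≤ 1 / ((k : ℝ) + 1) :=
        one_div_le_one_div_of_le (by positivity) (by linarith)
      have e2 : 1 / ((m : ℝ) + 2) ≤ 1 / ((k : ℝ) + 1) :=
        one_div_le_one_div_of_le (by positivity) (by linarith)
      linarith
    · intro ε εpos
      obtain ⟨k, hk⟩ := exists_nat_one_div_lt εpos
      refine ⟨N k, ?_⟩
      intro j hj hjE
      have hkj : k ≤ j := le_trans hNmono.le_apply hj
      obtain ⟨m, hkm, hm1, hm2⟩ := exists_interval_of_strictMono N hNmono hj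
      have hjF : j ∉ F m := fun hjF => hjE ⟨m, hjF, hm1, hm2⟩
      have hlt : |x j - L| < 1 / ((m : ℝ) + 1) := lt_of_not_ge hjF
      have hkmR : (k : ℝ) ≤ (m : ℝ) := by exact_mod_cast hkm
      have e1 : 1 / ((m : ℝ) + 1) ≤ 1 / ((k : ℝ) + 1) :=
        one_div_le_one_div_of_le (by positivity) (by linarith)
      linarith
  · rintro ⟨E, hE, hconv⟩ ε εpos
    obtain ⟨N, hN⟩ := hconv ε εpos
    have hsub : {j : ℕ | ε ≤ |x j - L|} ⊆ E ∪ {j | j < N} := by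
      intro j hj
      by_cases hjE : j ∈ E
      · exact Or.inl hjE
      · refine Or.inr ?_
        by_contra hjN
        exact absurd hj (not_le.2 (hN j (Nat.le_of_not_lt hjN) hjE))
    refine squeeze_zero' ?_ ?_ (g := fun t => P.densityFn E t + P.densityFn {j : ℕ | j < N} t) ?_
    · filter_upwards [P.eventually_dom] with t ht
      exact P.densityFn_nonneg ht.1 ht.2 _
    · filter_upwards [P.eventually_dom] with t ht
      exact le_trans (P.densityFn_mono ht.1 ht.2 hsub) (P.densityFn_union_le ht.1 ht.2 _ _)
    · simpa using hE.add (P.hasDensity_Iio hP N)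
end

section
/- Suppose P is a regular power series method and the Korovkin test hypotheses hold. Then st_P-lim_{j→∞} ( max_{x∈X} |T_j(Q_x)(x)| ) = 0, where Q_x(y) = Σ_{λ=1}^d g_λ(x) ψ_λ(y). -/
open Filter Topology
open scoped ENNReal

section Aux

variable (P : PowerSeriesMethod)

private lemma eventually_nice :
    ∀ᶠ t in P.limFilter, 0 < t ∧ Summable (fun j => P.s j * t ^ j) ∧ 0 < P.sum t := by
  have key : ∀ t : ℝ, 0 < t → ENNReal.ofReal t < P.R →
      Summable (fun j => P.s j * t ^ j) ∧ 0 < P.sum t := by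
    intro t ht hlt
    have hsum := P.summable_of_lt t ht hlt
    refine ⟨hsum, ?_⟩
    have h0 : P.s 0 * t ^ 0 ≤ P.sum t :=
      Summable.le_tsum hsum 0 (fun j _ => mul_nonneg (P.s_nonneg j) (pow_nonneg ht.le j))
    have h1 : 0 < P.s 0 * t ^ 0 := by simpa using P.s0_pos
    linarith
  unfold PowerSeriesMethod.limFilter
  split_ifs with hR
  · filter_upwards [eventually_gt_atTop (0 : ℝ)] with t ht
    exact ⟨ht, key t ht (by simp [hR])⟩
  · filter_upwards [self_mem_nhdsWithin] with t ht
    have ht0 : 0 < t := ht.1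
    have hlt : ENNReal.ofReal t < P.R := by
      rw [ENNReal.ofReal_lt_iff_lt_toReal ht0.le hR]
      exact ht.2
    exact ⟨ht0, key t ht0 hlt⟩

private lemma hasDensity_zero_mono {E F : Set ℕ} (hEF : E ⊆ F)
    (hF : P.HasDensity F 0) : P.HasDensity E 0 := by
  refine tendsto_of_tendsto_of_tendsto_of_le_of_le' tendsto_const_nhds hF ?_ ?_
  · filter_upwards [eventually_nice P] with t ⟨ht, hsum, hpos⟩
    exact div_nonneg (tsum_nonneg fun j => Set.indicator_nonneg
      (fun j _ => mul_nonneg (P.s_nonneg j) (pow_nonneg ht.le j)) j) hpos.le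
  · filter_upwards [eventually_nice P] with t ⟨ht, hsum, hpos⟩
    have hnn : ∀ j, 0 ≤ P.s j * t ^ j := fun j =>
      mul_nonneg (P.s_nonneg j) (pow_nonneg ht.le j)
    unfold PowerSeriesMethod.densityFn
    gcongr ?_ / _
    exact Summable.tsum_le_tsum (fun j => Set.indicator_le_indicator_of_subset hEF hnn j)
      (hsum.indicator E) (hsum.indicator F)

private lemma hasDensity_zero_empty : P.HasDensity (∅ : Set ℕ) 0 := by
  have : P.densityFn ∅ = fun _ => (0 : ℝ) := by
    funext t
    simp [PowerSeriesMethod.densityFn]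
  rw [PowerSeriesMethod.HasDensity, this]
  exact tendsto_const_nhds

private lemma hasDensity_zero_union {E F : Set ℕ} (hE : P.HasDensity E 0)
    (hF : P.HasDensity F 0) : P.HasDensity (E ∪ F) 0 := by
  have hsum0 : Tendsto (fun t => P.densityFn E t + P.densityFn F t) P.limFilter (𝓝 0) := by
    simpa using hE.add hF
  refine tendsto_of_tendsto_of_tendsto_of_le_of_le' tendsto_const_nhds hsum0 ?_ ?_
  · filter_upwards [eventually_nice P] with t ⟨ht, hsum, hpos⟩
    exact div_nonneg (tsum_nonneg fun j => Set.indicator_nonneg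
      (fun j _ => mul_nonneg (P.s_nonneg j) (pow_nonneg ht.le j)) j) hpos.le
  · filter_upwards [eventually_nice P] with t ⟨ht, hsum, hpos⟩
    have hnn : ∀ j, 0 ≤ P.s j * t ^ j := fun j =>
      mul_nonneg (P.s_nonneg j) (pow_nonneg ht.le j)
    have hptw : ∀ j, Set.indicator (E ∪ F) (fun j => P.s j * t ^ j) j ≤
        Set.indicator E (fun j => P.s j * t ^ j) j +
        Set.indicator F (fun j => P.s j * t ^ j) j := by
      intro j
      by_cases hEj : j ∈ E
      · rw [Set.indicator_of_mem (Set.mem_union_left _ hEj), Set.indicator_of_mem hEj]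
        have := Set.indicator_nonneg (fun j (_ : j ∈ F) => hnn j) j
        linarith
      · by_cases hFj : j ∈ F
        · rw [Set.indicator_of_mem (Set.mem_union_right _ hFj),
            Set.indicator_of_notMem hEj, Set.indicator_of_mem hFj]
          linarith
        · rw [Set.indicator_of_notMem (by simp [hEj, hFj]),
            Set.indicator_of_notMem hEj, Set.indicator_of_notMem hFj]
          linarith
    have hts : (∑' j, Set.indicator (E ∪ F) (fun j => P.s j * t ^ j) j) ≤
        (∑' j, Set.indicator E (fun j => P.s j * t ^ j) j) +
        (∑' j, Set.indicator F (fun j => P.s j * t ^ j) j) := by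
      rw [← Summable.tsum_add (hsum.indicator E) (hsum.indicator F)]
      exact Summable.tsum_le_tsum hptw (hsum.indicator (E ∪ F)) ((hsum.indicator E).add (hsum.indicator F))
    unfold PowerSeriesMethod.densityFn
    rw [← add_div]
    gcongr

private lemma hasDensity_zero_biUnion {ι : Type*} [DecidableEq ι] (s : Finset ι)
    (E : ι → Set ℕ) (h : ∀ i ∈ s, P.HasDensity (E i) 0) :
    P.HasDensity (⋃ i ∈ s, E i) 0 := by
  induction s using Finset.induction with
  | empty => simpa using hasDensity_zero_empty P
  | @insert a s hnot ih =>
    rw [Finset.set_biUnion_insert]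
    exact hasDensity_zero_union P (h a (Finset.mem_insert_self a s))
      (ih fun i hi => h i (Finset.mem_insert_of_mem hi))

end Aux

/-- under the Korovkin test hypotheses,
`st_P-lim (max_{x ∈ X} |T_j(Q_x)(x)|) = 0`, where `Q_x = ∑ g_λ(x) • ψ_λ`. -/
theorem statTendsto_sup_T_Qx (P : PowerSeriesMethod) (hP : P.Regular)
    {X : Type*} [TopologicalSpace X] [CompactSpace X] [T2Space X] [Nontrivial X]
    (d : ℕ) (ψ g : Fin d → C(X, ℝ))
    (hQpos : ∀ x y : X, 0 ≤ ∑ l, g l x * ψ l y)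
    (hQzero : ∀ x y : X, (∑ l, g l x * ψ l y) = 0 ↔ y = x)
    (T : ℕ → C(X, ℝ) →ₗ[ℝ] C(X, ℝ))
    (hTpos : ∀ j (f : C(X, ℝ)), 0 ≤ f → 0 ≤ T j f)
    (hTconv : ∀ l, P.StatTendsto (fun j => ‖T j (ψ l) - ψ l‖) 0) :
    P.StatTendsto (fun j => ⨆ x : X, |T j (∑ l, g l x • ψ l) x|) 0 := by
  obtain ⟨x₀, y₀, hxy⟩ := exists_pair_ne X
  rcases Nat.eq_zero_or_pos d with hd | hd
  · subst hd
    exact absurd ((hQzero x₀ y₀).mp (by simp)).symm hxy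
  haveI : Nonempty (Fin d) := ⟨⟨0, hd⟩⟩
  intro ε hε
  set a : Fin d → ℕ → ℝ := fun l j => ‖T j (ψ l) - ψ l‖ with ha
  set δ : Fin d → ℝ := fun l => ε / (d * (‖g l‖ + 1)) with hδ
  have hgpos : ∀ l : Fin d, (0 : ℝ) < ‖g l‖ + 1 := fun l => by positivity
  have hδpos : ∀ l, 0 < δ l := fun l => by
    have : (0 : ℝ) < d := by exact_mod_cast hd
    exact div_pos hε (by positivity)
  -- pointwise bound on the sup
  have hbound : ∀ j, (⨆ x : X, |T j (∑ l, g l x • ψ l) x|) ≤ ∑ l, ‖g l‖ * a l j := by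
    intro j
    apply ciSup_le
    intro x
    have h1 : (T j (∑ l, g l x • ψ l)) x = ∑ l, g l x * (T j (ψ l)) x := by
      rw [map_sum]
      simp [smul_eq_mul]
    have h0 : ∑ l, g l x * ψ l x = 0 := (hQzero x x).mpr rfl
    have h2 : (T j (∑ l, g l x • ψ l)) x = ∑ l, g l x * ((T j (ψ l)) x - ψ l x) := by
      rw [h1]
      simp only [mul_sub, Finset.sum_sub_distrib, h0, sub_zero]
    calc |T j (∑ l, g l x • ψ l) x| = |∑ l, g l x * ((T j (ψ l)) x - ψ l x)| := by rw [h2]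
      _ ≤ ∑ l, |g l x * ((T j (ψ l)) x - ψ l x)| := Finset.abs_sum_le_sum_abs _ _
      _ ≤ ∑ l, ‖g l‖ * a l j := by
          apply Finset.sum_le_sum
          intro l _
          rw [abs_mul]
          have hg : |g l x| ≤ ‖g l‖ := by
            simpa [Real.norm_eq_abs] using (g l).norm_coe_le_norm x
          have hψ : |(T j (ψ l)) x - ψ l x| ≤ a l j := by
            simpa [Real.norm_eq_abs] using (T j (ψ l) - ψ l).norm_coe_le_norm x
          exact mul_le_mul hg hψ (abs_nonneg _) (norm_nonneg _)
  have hsupnn : ∀ j, 0 ≤ ⨆ x : X, |T j (∑ l, g l x • ψ l) x| := fun j =>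
    Real.iSup_nonneg fun x => abs_nonneg _
  have hsub : {j | ε ≤ |(⨆ x : X, |T j (∑ l, g l x • ψ l) x|) - 0|} ⊆
      ⋃ l ∈ (Finset.univ : Finset (Fin d)), {j | δ l ≤ |a l j - 0|} := by
    intro j hj
    simp only [Set.mem_setOf_eq, sub_zero, abs_of_nonneg (hsupnn j)] at hj
    by_contra hcon
    simp only [Set.mem_iUnion, Set.mem_setOf_eq, not_exists, not_le, sub_zero] at hcon
    have hlt : ∀ l : Fin d, ‖g l‖ * a l j < ε / d := by
      intro l
      have h1 : |a l j| < δ l := hcon l (Finset.mem_univ l)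
      have h2 : a l j < δ l := by
        rwa [abs_of_nonneg (norm_nonneg _)] at h1
      have h3 : ‖g l‖ * a l j ≤ (‖g l‖ + 1) * a l j :=
        mul_le_mul_of_nonneg_right (by linarith) (norm_nonneg _)
      have h4 : (‖g l‖ + 1) * a l j < (‖g l‖ + 1) * δ l :=
        mul_lt_mul_of_pos_left h2 (hgpos l)
      have h5 : (‖g l‖ + 1) * δ l = ε / d := by
        rw [hδ]
        have hd0 : (d : ℝ) ≠ 0 := by positivity
        field_simp
      linarith
    have hsum : ∑ l, ‖g l‖ * a l j < ∑ _l : Fin d, ε / d :=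
      Finset.sum_lt_sum_of_nonempty Finset.univ_nonempty (fun l _ => hlt l)
    have : ∑ _l : Fin d, ε / d = ε := by
      rw [Finset.sum_const, Finset.card_univ, Fintype.card_fin, nsmul_eq_mul]
      field_simp
    have := hbound j
    linarith [hj]
  exact hasDensity_zero_mono P hsub
    (hasDensity_zero_biUnion P Finset.univ _ fun l _ => hTconv l (δ l) (hδpos l))
end

section
/- Suppose P is a regular power series method and the Korovkin test hypotheses hold. Then there exists a subset E ⊆ ℕ with P-density δ_P(E) = 1 such that sup_{j∈E} ‖T_j‖ < ∞, where ‖T_j‖ = sup_{‖ψ‖=1} ‖T_j(ψ)‖ is the operator norm. -/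
open Filter Topology
open scoped ENNReal

namespace PowerSeriesMethodAux

open PowerSeriesMethod

lemma eventually_cond (P : PowerSeriesMethod) :
    ∀ᶠ t in P.limFilter, 0 < t ∧ ENNReal.ofReal t < P.R := by
  rw [PowerSeriesMethod.limFilter]
  split_ifs with h
  · filter_upwards [eventually_ge_atTop (1:ℝ)] with t ht
    exact ⟨lt_of_lt_of_le one_pos ht, h ▸ ENNReal.ofReal_lt_top⟩
  · filter_upwards [eventually_mem_nhdsWithin] with t ht
    exact ⟨ht.1, (ENNReal.ofReal_lt_iff_lt_toReal ht.1.le h).2 ht.2⟩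

lemma term_nonneg (P : PowerSeriesMethod) {t : ℝ} (ht : 0 < t) (j : ℕ) :
    0 ≤ P.s j * t ^ j :=
  mul_nonneg (P.s_nonneg j) (pow_nonneg ht.le j)

lemma sum_pos (P : PowerSeriesMethod) {t : ℝ} (ht : 0 < t)
    (ht' : ENNReal.ofReal t < P.R) : 0 < P.sum t := by
  have h := P.summable_of_lt t ht ht'
  have h0 : P.s 0 * t ^ 0 ≤ P.sum t :=
    Summable.le_tsum h 0 (fun j _ => term_nonneg P ht j)
  have : P.s 0 * t ^ 0 = P.s 0 := by simp
  linarith [P.s0_pos]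

lemma densityFn_nonneg (P : PowerSeriesMethod) (E : Set ℕ) {t : ℝ} (ht : 0 < t)
    (ht' : ENNReal.ofReal t < P.R) : 0 ≤ P.densityFn E t :=
  div_nonneg (tsum_nonneg fun j => Set.indicator_apply_nonneg fun _ => term_nonneg P ht j)
    (sum_pos P ht ht').le

lemma densityFn_compl (P : PowerSeriesMethod) (E : Set ℕ) {t : ℝ} (ht : 0 < t)
    (ht' : ENNReal.ofReal t < P.R) :
    P.densityFn Eᶜ t = 1 - P.densityFn E t := by
  have hs := P.summable_of_lt t ht ht'
  have hE := hs.indicator E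
  have hEc := hs.indicator Eᶜ
  have hadd : (∑' j, E.indicator (fun j => P.s j * t ^ j) j) +
      (∑' j, Eᶜ.indicator (fun j => P.s j * t ^ j) j) = P.sum t := by
    rw [← Summable.tsum_add hE hEc]
    exact tsum_congr fun j => Set.indicator_self_add_compl_apply E _ j
  have hpos := sum_pos P ht ht'
  rw [PowerSeriesMethod.densityFn, PowerSeriesMethod.densityFn]
  field_simp
  linarith

lemma hasDensity_compl_one (P : PowerSeriesMethod) {E : Set ℕ}
    (h : P.HasDensity E 0) : P.HasDensity Eᶜ 1 := by
  have heq : P.densityFn Eᶜ =ᶠ[P.limFilter] fun t => 1 - P.densityFn E t := by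
    filter_upwards [eventually_cond P] with t ht
    exact densityFn_compl P E ht.1 ht.2
  refine Tendsto.congr' heq.symm ?_
  simpa using (tendsto_const_nhds (x := (1:ℝ)) (f := P.limFilter)).sub h

lemma hasDensity_iUnion_zero (P : PowerSeriesMethod) {d : ℕ} {F : Fin d → Set ℕ}
    (h : ∀ l, P.HasDensity (F l) 0) : P.HasDensity (⋃ l, F l) 0 := by
  have hg : Tendsto (fun t => ∑ l, P.densityFn (F l) t) P.limFilter (𝓝 0) := by
    have := tendsto_finset_sum (f := fun l t => P.densityFn (F l) t)
      (Finset.univ : Finset (Fin d)) (fun l _ => h l)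
    simpa using this
  refine squeeze_zero' ?_ ?_ hg
  · filter_upwards [eventually_cond P] with t ht
    exact densityFn_nonneg P _ ht.1 ht.2
  · filter_upwards [eventually_cond P] with t ht
    have hs := P.summable_of_lt t ht.1 ht.2
    have hnn := term_nonneg P ht.1
    have hpos := sum_pos P ht.1 ht.2
    have h1 : (∑' j, (⋃ l, F l).indicator (fun j => P.s j * t ^ j) j) ≤
        ∑ l, ∑' j, (F l).indicator (fun j => P.s j * t ^ j) j := by
      rw [← Summable.tsum_finsetSum (fun l _ => hs.indicator (F l))]
      refine Summable.tsum_le_tsum ?_ (hs.indicator _)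
        (summable_sum fun l _ => hs.indicator (F l))
      intro j
      by_cases hj : j ∈ ⋃ l, F l
      · obtain ⟨l, hl⟩ := Set.mem_iUnion.1 hj
        rw [Set.indicator_of_mem hj]
        calc P.s j * t ^ j = (F l).indicator (fun j => P.s j * t ^ j) j := by
              rw [Set.indicator_of_mem hl]
          _ ≤ _ := Finset.single_le_sum
              (f := fun i => (F i).indicator (fun j => P.s j * t ^ j) j)
              (fun i _ => Set.indicator_apply_nonneg fun _ => hnn j) (Finset.mem_univ l)
      · rw [Set.indicator_of_notMem hj]
        exact Finset.sum_nonneg fun l _ => Set.indicator_apply_nonneg fun _ => hnn j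
    calc P.densityFn (⋃ l, F l) t
        ≤ (∑ l, ∑' j, (F l).indicator (fun j => P.s j * t ^ j) j) / P.sum t :=
          (div_le_div_iff_of_pos_right hpos).2 h1
      _ = ∑ l, P.densityFn (F l) t := Finset.sum_div _ _ _

end PowerSeriesMethodAux

open PowerSeriesMethodAux

/-- under the Korovkin test hypotheses, there is a set `E` of `P`-density `1`
on which the operator norms `‖T_j‖ = sup_{‖f‖ = 1} ‖T_j f‖` are uniformly bounded. -/
theorem exists_density_one_uniform_bound (P : PowerSeriesMethod) (hP : P.Regular)
    {X : Type*} [TopologicalSpace X] [CompactSpace X] [T2Space X] [Nontrivial X]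
    (d : ℕ) (ψ g : Fin d → C(X, ℝ))
    (hQpos : ∀ x y : X, 0 ≤ ∑ l, g l x * ψ l y)
    (hQzero : ∀ x y : X, (∑ l, g l x * ψ l y) = 0 ↔ y = x)
    (T : ℕ → C(X, ℝ) →ₗ[ℝ] C(X, ℝ))
    (hTpos : ∀ j (f : C(X, ℝ)), 0 ≤ f → 0 ≤ T j f)
    (hTconv : ∀ l, P.StatTendsto (fun j => ‖T j (ψ l) - ψ l‖) 0) :
    ∃ E : Set ℕ, P.HasDensity E 1 ∧
      ∃ M : ℝ, ∀ j ∈ E, ∀ f : C(X, ℝ), ‖f‖ = 1 → ‖T j f‖ ≤ M := by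
  -- two distinct points
  obtain ⟨x1, x2, hx⟩ := exists_pair_ne X
  -- the strictly positive test function h
  set a : Fin d → ℝ := fun l => g l x1 + g l x2 with ha
  set h : C(X, ℝ) := ∑ l, a l • ψ l with hh
  have hval : ∀ y, h y = (∑ l, g l x1 * ψ l y) + ∑ l, g l x2 * ψ l y := by
    intro y
    simp only [hh, ha, ContinuousMap.coe_sum, ContinuousMap.coe_smul, Finset.sum_apply,
      Pi.smul_apply, smul_eq_mul, add_mul, ← Finset.sum_add_distrib]
  have hpos : ∀ y, 0 < h y := by
    intro y
    rcases lt_or_eq_of_le (add_nonneg (hQpos x1 y) (hQpos x2 y)) with h' | h'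
    · rw [hval]; linarith
    · exfalso
      have h1 : (∑ l, g l x1 * ψ l y) = 0 := by
        have := hQpos x1 y; have := hQpos x2 y; linarith
      have h2 : (∑ l, g l x2 * ψ l y) = 0 := by
        have := hQpos x1 y; have := hQpos x2 y; linarith
      exact hx (((hQzero x1 y).1 h1).symm.trans ((hQzero x2 y).1 h2))
  -- the positive minimum c of h
  obtain ⟨y0, -, hy0⟩ := isCompact_univ.exists_isMinOn (Set.univ_nonempty)
    h.continuous.continuousOn
  set c : ℝ := h y0 with hc
  have hcpos : 0 < c := hpos y0
  have hch : ∀ y, c ≤ h y := fun y => hy0 (Set.mem_univ y)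
  -- the density-one set
  set F : Fin d → Set ℕ := fun l => {j | (1:ℝ) ≤ |‖T j (ψ l) - ψ l‖ - 0|} with hF
  have hFd : ∀ l, P.HasDensity (F l) 0 := fun l => hTconv l 1 one_pos
  refine ⟨(⋃ l, F l)ᶜ, hasDensity_compl_one P (hasDensity_iUnion_zero P hFd), ?_⟩
  set C : ℝ := ∑ l, |a l| * (1 + ‖ψ l‖) with hC
  refine ⟨c⁻¹ * C, ?_⟩
  intro j hj f hf
  have hjl : ∀ l, ‖T j (ψ l) - ψ l‖ < 1 := by
    intro l
    have : j ∉ F l := fun hmem => hj (Set.mem_iUnion.2 ⟨l, hmem⟩)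
    simp only [hF, Set.mem_setOf_eq, sub_zero, not_le] at this
    calc ‖T j (ψ l) - ψ l‖ ≤ |‖T j (ψ l) - ψ l‖| := le_abs_self _
      _ < 1 := this
  -- bound on ‖T j h‖
  have hTh : ‖T j h‖ ≤ C := by
    have heq : T j h = ∑ l, a l • T j (ψ l) := by
      rw [hh, map_sum]
      simp [map_smul]
    rw [heq]
    calc ‖∑ l, a l • T j (ψ l)‖ ≤ ∑ l, ‖a l • T j (ψ l)‖ := norm_sum_le _ _
      _ ≤ ∑ l, |a l| * (1 + ‖ψ l‖) := by
          refine Finset.sum_le_sum fun l _ => ?_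
          calc ‖a l • T j (ψ l)‖ ≤ |a l| * ‖T j (ψ l)‖ := by
                simpa [Real.norm_eq_abs] using norm_smul_le (a l) (T j (ψ l))
            _ ≤ |a l| * (1 + ‖ψ l‖) := by
                refine mul_le_mul_of_nonneg_left ?_ (abs_nonneg _)
                calc ‖T j (ψ l)‖ = ‖(T j (ψ l) - ψ l) + ψ l‖ := by ring_nf
                  _ ≤ ‖T j (ψ l) - ψ l‖ + ‖ψ l‖ := norm_add_le _ _
                  _ ≤ 1 + ‖ψ l‖ := by linarith [hjl l]
  -- pointwise bound on T j f
  have hfb : ∀ y, |f y| ≤ 1 := by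
    intro y
    have := ContinuousMap.norm_coe_le_norm f y
    rwa [hf, Real.norm_eq_abs] at this
  have hTfh : ∀ (f' : C(X, ℝ)), (∀ y, f' y ≤ 1) → ∀ x, (T j f') x ≤ c⁻¹ * (T j h) x := by
    intro f' hf' x
    have hnn : (0:C(X, ℝ)) ≤ c⁻¹ • h - f' := by
      rw [ContinuousMap.le_def]
      intro y
      have h1 : (1:ℝ) ≤ c⁻¹ * h y := by
        rw [← inv_mul_cancel₀ hcpos.ne']
        exact mul_le_mul_of_nonneg_left (hch y) (inv_nonneg.2 hcpos.le)
      simp only [ContinuousMap.coe_sub, ContinuousMap.coe_smul, Pi.sub_apply,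
        Pi.smul_apply, smul_eq_mul, ContinuousMap.coe_zero, Pi.zero_apply]
      linarith [hf' y]
    have := hTpos j _ hnn
    rw [ContinuousMap.le_def] at this
    have h2 := this x
    rw [map_sub, map_smul] at h2
    simp only [ContinuousMap.coe_sub, ContinuousMap.coe_smul, Pi.sub_apply,
      Pi.smul_apply, smul_eq_mul, ContinuousMap.coe_zero, Pi.zero_apply] at h2
    linarith
  have key : ∀ x, |(T j f) x| ≤ c⁻¹ * ‖T j h‖ := by
    intro x
    have hb1 := hTfh f (fun y => (le_abs_self _).trans (hfb y)) x
    have hb2 := hTfh (-f) (fun y => by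
      simp only [ContinuousMap.coe_neg, Pi.neg_apply]
      linarith [neg_abs_le (f y), hfb y]) x
    rw [map_neg] at hb2
    simp only [ContinuousMap.coe_neg, Pi.neg_apply] at hb2
    have hTx : (T j h) x ≤ ‖T j h‖ := by
      have := ContinuousMap.norm_coe_le_norm (T j h) x
      rw [Real.norm_eq_abs] at this
      linarith [le_abs_self ((T j h) x)]
    have hmul : c⁻¹ * (T j h) x ≤ c⁻¹ * ‖T j h‖ :=
      mul_le_mul_of_nonneg_left hTx (inv_nonneg.2 hcpos.le)
    rw [abs_le]
    constructor <;> linarith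
  have hCnn : 0 ≤ C := Finset.sum_nonneg fun l _ =>
    mul_nonneg (abs_nonneg _) (by positivity)
  rw [ContinuousMap.norm_le _ (mul_nonneg (inv_nonneg.2 hcpos.le) hCnn)]
  intro x
  rw [Real.norm_eq_abs]
  exact (key x).trans (mul_le_mul_of_nonneg_left hTh (inv_nonneg.2 hcpos.le))
end

section
/- Suppose P is a regular power series method and the Korovkin test hypotheses hold. Let σ : X × X → ℝ be a continuous function with σ(x, x) = 0 for every x ∈ X, and for fixed x write σ_x(y) = σ(x, y). Then st_P-lim_{j→∞} ( max_{x∈X} |T_j(σ_x)(x)| ) = 0. -/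
open Filter Topology
open scoped ENNReal

namespace PowerSeriesMethod

lemma eventually_cond (P : PowerSeriesMethod) :
    ∀ᶠ t in P.limFilter, 0 < t ∧ ENNReal.ofReal t < P.R := by
  unfold limFilter
  split_ifs with h
  · filter_upwards [eventually_gt_atTop (0:ℝ)] with t ht
    exact ⟨ht, h ▸ ENNReal.ofReal_lt_top⟩
  · filter_upwards [self_mem_nhdsWithin] with t ht
    exact ⟨ht.1, (ENNReal.ofReal_lt_iff_lt_toReal ht.1.le h).mpr ht.2⟩

lemma sum_pos' (P : PowerSeriesMethod) {t : ℝ} (ht : 0 < t) (hR : ENNReal.ofReal t < P.R) :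
    0 < P.sum t := by
  have hs := P.summable_of_lt t ht hR
  have h0 : P.s 0 ≤ P.sum t := by
    have := Summable.le_tsum hs 0 (fun j _ => mul_nonneg (P.s_nonneg j) (pow_nonneg ht.le j))
    simpa [PowerSeriesMethod.sum] using this
  exact lt_of_lt_of_le P.s0_pos h0

lemma hasDensity_zero_of_subset_iUnion (P : PowerSeriesMethod) {ι : Type*} [Fintype ι]
    (E : ι → Set ℕ) (hE : ∀ i, P.HasDensity (E i) 0) {E' : Set ℕ}
    (hsub : E' ⊆ ⋃ i, E i) : P.HasDensity E' 0 := by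
  have hsum : Tendsto (fun t => ∑ i, P.densityFn (E i) t) P.limFilter (𝓝 0) := by
    have := tendsto_finset_sum (f := fun i t => P.densityFn (E i) t)
      Finset.univ (fun i _ => hE i)
    simpa using this
  refine tendsto_of_tendsto_of_tendsto_of_le_of_le' tendsto_const_nhds hsum ?_ ?_
  · filter_upwards [P.eventually_cond] with t ht
    obtain ⟨ht, hR⟩ := ht
    have hnn : ∀ j, 0 ≤ P.s j * t ^ j := fun j => mul_nonneg (P.s_nonneg j) (pow_nonneg ht.le j)
    exact div_nonneg (tsum_nonneg fun j => Set.indicator_nonneg (fun j _ => hnn j) j)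
      (P.sum_pos' ht hR).le
  · filter_upwards [P.eventually_cond] with t ht
    obtain ⟨ht, hR⟩ := ht
    have hs := P.summable_of_lt t ht hR
    have hnn : ∀ j, 0 ≤ P.s j * t ^ j := fun j => mul_nonneg (P.s_nonneg j) (pow_nonneg ht.le j)
    have hsummand : ∀ (A : Set ℕ),
        Summable (fun j => Set.indicator A (fun j => P.s j * t ^ j) j) :=
      fun A => hs.indicator A
    have hnum : (∑' j, Set.indicator E' (fun j => P.s j * t ^ j) j)
        ≤ ∑ i, ∑' j, Set.indicator (E i) (fun j => P.s j * t ^ j) j := by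
      rw [← Summable.tsum_finsetSum (fun i _ => hsummand (E i))]
      refine Summable.tsum_le_tsum ?_ (hsummand E') (summable_sum fun i _ => hsummand (E i))
      intro j
      by_cases hj : j ∈ E'
      · obtain ⟨i, hi⟩ := Set.mem_iUnion.mp (hsub hj)
        calc Set.indicator E' (fun j => P.s j * t ^ j) j
            = Set.indicator (E i) (fun j => P.s j * t ^ j) j := by
              rw [Set.indicator_of_mem hj, Set.indicator_of_mem hi]
          _ ≤ ∑ i', Set.indicator (E i') (fun j => P.s j * t ^ j) j :=
              Finset.single_le_sum (fun i' _ => Set.indicator_nonneg (fun j _ => hnn j) j)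
                (Finset.mem_univ i)
      · rw [Set.indicator_of_notMem hj]
        exact Finset.sum_nonneg fun i _ => Set.indicator_nonneg (fun j _ => hnn j) j
    have hpos := P.sum_pos' ht hR
    calc P.densityFn E' t
        ≤ (∑ i, ∑' j, Set.indicator (E i) (fun j => P.s j * t ^ j) j) / P.sum t := by
          exact div_le_div_of_nonneg_right hnum hpos.le
      _ = ∑ i, P.densityFn (E i) t := by rw [Finset.sum_div]; rfl


end PowerSeriesMethod

/-- under the Korovkin test hypotheses, if `σ : X × X → ℝ` is continuous with
`σ(x, x) = 0`, then `st_P-lim (max_{x ∈ X} |T_j(σ_x)(x)|) = 0`, where `σ_x(y) = σ(x, y)`. -/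
theorem statTendsto_sup_T_sigma (P : PowerSeriesMethod) (hP : P.Regular)
    {X : Type*} [TopologicalSpace X] [CompactSpace X] [T2Space X] [Nontrivial X]
    (d : ℕ) (ψ g : Fin d → C(X, ℝ))
    (hQpos : ∀ x y : X, 0 ≤ ∑ l, g l x * ψ l y)
    (hQzero : ∀ x y : X, (∑ l, g l x * ψ l y) = 0 ↔ y = x)
    (T : ℕ → C(X, ℝ) →ₗ[ℝ] C(X, ℝ))
    (hTpos : ∀ j (f : C(X, ℝ)), 0 ≤ f → 0 ≤ T j f)
    (hTconv : ∀ l, P.StatTendsto (fun j => ‖T j (ψ l) - ψ l‖) 0)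
    (σ : C(X × X, ℝ)) (hσ : ∀ x : X, σ (x, x) = 0) :
    P.StatTendsto (fun j => ⨆ x : X, |T j (σ.curry x) x|) 0 := by
  obtain ⟨a, b, hab⟩ := exists_pair_ne X
  have hXne : Nonempty X := ⟨a⟩
  -- the function q and the continuous maps Qx x
  set q : X × X → ℝ := fun p => ∑ l, g l p.1 * ψ l p.2 with hq_def
  have hq_cont : Continuous q := by
    apply continuous_finset_sum
    intro l _
    exact ((g l).continuous.comp continuous_fst).mul ((ψ l).continuous.comp continuous_snd)
  set Qx : X → C(X, ℝ) := fun x => ∑ l, g l x • ψ l with hQx_def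
  have hQx_apply : ∀ x y : X, (Qx x) y = q (x, y) := by
    intro x y; simp [hQx_def, hq_def]
  have hq_nonneg : ∀ p : X × X, 0 ≤ q p := fun p => hQpos p.1 p.2
  have hQx_nonneg : ∀ x y : X, 0 ≤ (Qx x) y := fun x y => (hQx_apply x y) ▸ hq_nonneg (x, y)
  have hQx_sum : ∀ x y : X, (Qx x) y = ∑ l, g l x * ψ l y := by
    intro x y; simp [hQx_def]
  have hQx_diag : ∀ x : X, (Qx x) x = 0 := fun x => by
    rw [hQx_sum]; exact (hQzero x x).mpr rfl
  -- monotonicity of T j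
  have hTmono : ∀ j {f₁ f₂ : C(X, ℝ)}, f₁ ≤ f₂ → T j f₁ ≤ T j f₂ := by
    intro j f₁ f₂ h
    have := hTpos j (f₂ - f₁) (sub_nonneg.mpr h)
    rw [map_sub] at this
    exact sub_nonneg.mp this
  -- the error bound B
  set B : ℕ → ℝ := fun j => ∑ l, ‖g l‖ * ‖T j (ψ l) - ψ l‖ with hB_def
  have hB_nonneg : ∀ j, 0 ≤ B j := fun j =>
    Finset.sum_nonneg fun l _ => mul_nonneg (norm_nonneg _) (norm_nonneg _)
  have hTQ : ∀ (j : ℕ) (x y : X), |(T j (Qx x)) y - (Qx x) y| ≤ B j := by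
    intro j x y
    have hmap : T j (Qx x) = ∑ l, g l x • T j (ψ l) := by
      rw [hQx_def]; simp [map_sum, map_smul]
    have h1 : (T j (Qx x)) y - (Qx x) y = ∑ l, g l x * ((T j (ψ l) - ψ l) y) := by
      rw [hmap, hQx_def]
      simp [mul_sub, Finset.sum_sub_distrib]
    rw [h1]
    calc |∑ l, g l x * ((T j (ψ l) - ψ l) y)| ≤ ∑ l, |g l x * ((T j (ψ l) - ψ l) y)| :=
          Finset.abs_sum_le_sum_abs _ _
      _ ≤ ∑ l, ‖g l‖ * ‖T j (ψ l) - ψ l‖ := by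
          refine Finset.sum_le_sum fun l _ => ?_
          rw [abs_mul]
          refine mul_le_mul ?_ ?_ (abs_nonneg _) (norm_nonneg _)
          · exact (g l).norm_coe_le_norm x
          · exact (T j (ψ l) - ψ l).norm_coe_le_norm y
  -- positivity constant from two points
  obtain ⟨x₀, -, hx₀⟩ := isCompact_univ.exists_isMinOn (Set.univ_nonempty)
    ((Qx a + Qx b).continuous.continuousOn)
  set c : ℝ := (Qx a + Qx b) x₀ with hc_def
  have hc_le : ∀ y : X, c ≤ (Qx a + Qx b) y := fun y => hx₀ (Set.mem_univ y)
  have hc_pos : 0 < c := by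
    rcases lt_or_eq_of_le (add_nonneg (hQx_nonneg a x₀) (hQx_nonneg b x₀)) with h | h
    · simpa [hc_def] using h
    · exfalso
      have ha0 : (Qx a) x₀ = 0 := by
        have h1 := hQx_nonneg a x₀
        have h2 := hQx_nonneg b x₀
        have : (Qx a) x₀ + (Qx b) x₀ = 0 := by simpa [hc_def] using h.symm
        linarith
      have := (hQzero a x₀).mp (by rw [← hQx_sum]; exact ha0)
      have hb0 : (Qx b) x₀ = 0 := by
        have h1 := hQx_nonneg a x₀
        have h2 := hQx_nonneg b x₀
        have : (Qx a) x₀ + (Qx b) x₀ = 0 := by simpa [hc_def] using h.symm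
        linarith
      have hb' := (hQzero b x₀).mp (by rw [← hQx_sum]; exact hb0)
      exact hab (this ▸ hb' ▸ rfl)
  set M : ℝ := ‖Qx a + Qx b‖ with hM_def
  have hM_nonneg : 0 ≤ M := norm_nonneg _
  have hM_le : ∀ y : X, (Qx a + Qx b) y ≤ M := fun y =>
    (le_abs_self _).trans ((Qx a + Qx b).norm_coe_le_norm y)
  -- now fix ε
  intro ε hε
  set ε' : ℝ := (ε / 2) / (M / c + 1) with hε'_def
  have hMc_pos : 0 < M / c + 1 := by
    have : 0 ≤ M / c := div_nonneg hM_nonneg hc_pos.le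
    linarith
  have hε'_pos : 0 < ε' := div_pos (half_pos hε) hMc_pos
  -- decomposition constant K
  obtain ⟨K, hK0, hKbound⟩ : ∃ K : ℝ, 0 ≤ K ∧ ∀ p : X × X, |σ p| ≤ ε' + K * q p := by
    set C : Set (X × X) := {p | ε' ≤ |σ p|} with hC_def
    by_cases hCne : C.Nonempty
    · have hC_closed : IsClosed C := isClosed_le continuous_const σ.continuous.abs
      obtain ⟨p₀, hp₀C, hp₀'⟩ := hC_closed.isCompact.exists_isMinOn hCne hq_cont.continuousOn
      have hp₀ : ∀ p ∈ C, q p₀ ≤ q p := fun p hp => hp₀' hp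
      obtain ⟨p1, p2⟩ := p₀
      have hp₀pos : 0 < q (p1, p2) := by
        rcases lt_or_eq_of_le (hq_nonneg (p1, p2)) with h | h
        · exact h
        · exfalso
          have hq0 : (∑ l, g l p1 * ψ l p2) = 0 := by simpa [hq_def] using h.symm
          have h21 : p2 = p1 := (hQzero p1 p2).mp hq0
          have hp0 : σ (p1, p2) = 0 := by rw [h21]; exact hσ p1
          have := hp₀C
          rw [hC_def, Set.mem_setOf_eq, hp0, abs_zero] at this
          linarith
      refine ⟨‖σ‖ / q (p1, p2), div_nonneg (norm_nonneg _) hp₀pos.le, fun p => ?_⟩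
      by_cases hp : p ∈ C
      · have h1 : |σ p| ≤ ‖σ‖ := σ.norm_coe_le_norm p
        have h2 : ‖σ‖ = (‖σ‖ / q (p1, p2)) * q (p1, p2) := (div_mul_cancel₀ _ hp₀pos.ne').symm
        have h3 : (‖σ‖ / q (p1, p2)) * q (p1, p2) ≤ (‖σ‖ / q (p1, p2)) * q p :=
          mul_le_mul_of_nonneg_left (hp₀ p hp) (div_nonneg (norm_nonneg _) hp₀pos.le)
        linarith
      · have h4 : |σ p| < ε' := by
          rw [hC_def, Set.mem_setOf_eq, not_le] at hp; exact hp
        have h5 : (0:ℝ) ≤ (‖σ‖ / q (p1, p2)) * q p :=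
          mul_nonneg (div_nonneg (norm_nonneg _) hp₀pos.le) (hq_nonneg p)
        linarith

    · refine ⟨0, le_refl 0, fun p => ?_⟩
      have : ¬ ε' ≤ |σ p| := fun h => hCne ⟨p, h⟩
      push_neg at this
      linarith
  -- bound on T j 1
  have hone : (1 : C(X, ℝ)) ≤ c⁻¹ • (Qx a + Qx b) := by
    rw [ContinuousMap.le_def]
    intro y
    simp only [ContinuousMap.one_apply, ContinuousMap.smul_apply, smul_eq_mul]
    have h1 : (1:ℝ) = c⁻¹ * c := (inv_mul_cancel₀ hc_pos.ne').symm
    rw [h1]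
    exact mul_le_mul_of_nonneg_left (hc_le y) (inv_nonneg.mpr hc_pos.le)
  have hT1 : ∀ (j : ℕ) (x : X), (T j 1) x ≤ c⁻¹ * (M + 2 * B j) := by
    intro j x
    have h1 : (T j 1) x ≤ (T j (c⁻¹ • (Qx a + Qx b))) x := hTmono j hone x
    have h2 : T j (c⁻¹ • (Qx a + Qx b)) = c⁻¹ • (T j (Qx a) + T j (Qx b)) := by
      rw [map_smul, map_add]
    have h3 : (T j (Qx a)) x ≤ (Qx a) x + B j := by
      have := abs_le.mp (hTQ j a x); linarith [this.2]
    have h4 : (T j (Qx b)) x ≤ (Qx b) x + B j := by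
      have := abs_le.mp (hTQ j b x); linarith [this.2]
    have hle : (Qx a) x + (Qx b) x ≤ M := by
      have := hM_le x; rw [ContinuousMap.add_apply] at this; exact this
    have h5 : (T j (c⁻¹ • (Qx a + Qx b))) x = c⁻¹ * ((T j (Qx a)) x + (T j (Qx b)) x) := by
      rw [h2]; simp [smul_eq_mul, mul_add]
    have hcinv : 0 ≤ c⁻¹ := inv_nonneg.mpr hc_pos.le
    calc (T j 1) x ≤ c⁻¹ * ((T j (Qx a)) x + (T j (Qx b)) x) := by rw [← h5]; exact h1
      _ ≤ c⁻¹ * (M + 2 * B j) := by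
          apply mul_le_mul_of_nonneg_left _ hcinv
          linarith
  -- main pointwise bound
  have hmain : ∀ (j : ℕ) (x : X),
      |(T j (σ.curry x)) x| ≤ ε' * (c⁻¹ * (M + 2 * B j)) + K * B j := by
    intro j x
    set u : C(X, ℝ) := ε' • (1 : C(X, ℝ)) + K • Qx x with hu_def
    have hupper : σ.curry x ≤ u := by
      rw [ContinuousMap.le_def]
      intro y
      have := hKbound (x, y)
      have := abs_le.mp this
      simp only [hu_def, ContinuousMap.add_apply, ContinuousMap.smul_apply,
        ContinuousMap.one_apply, smul_eq_mul, mul_one, ContinuousMap.curry_apply]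
      rw [hQx_apply]
      linarith [this.1, this.2]
    have hlower : -u ≤ σ.curry x := by
      rw [ContinuousMap.le_def]
      intro y
      have := abs_le.mp (hKbound (x, y))
      simp only [hu_def, ContinuousMap.neg_apply, ContinuousMap.add_apply,
        ContinuousMap.smul_apply, ContinuousMap.one_apply, smul_eq_mul, mul_one,
        ContinuousMap.curry_apply]
      rw [hQx_apply]
      linarith [this.1]
    have hub : (T j (σ.curry x)) x ≤ (T j u) x := hTmono j hupper x
    have hlb : -((T j u) x) ≤ (T j (σ.curry x)) x := by
      have := hTmono j hlower x
      rw [map_neg] at this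
      simpa using this
    have habs : |(T j (σ.curry x)) x| ≤ (T j u) x := abs_le.mpr ⟨by linarith, hub⟩
    have hTu : (T j u) x = ε' * (T j 1) x + K * (T j (Qx x)) x := by
      rw [hu_def, map_add, map_smul, map_smul]
      simp [smul_eq_mul]
    have hTQx : (T j (Qx x)) x ≤ B j := by
      have := abs_le.mp (hTQ j x x)
      rw [hQx_diag x] at this
      linarith [this.2]
    calc |(T j (σ.curry x)) x| ≤ (T j u) x := habs
      _ = ε' * (T j 1) x + K * (T j (Qx x)) x := hTu
      _ ≤ ε' * (c⁻¹ * (M + 2 * B j)) + K * B j := by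
          have h1 := mul_le_mul_of_nonneg_left (hT1 j x) hε'_pos.le
          have h2 := mul_le_mul_of_nonneg_left hTQx hK0
          linarith
  -- bound on the sup
  set F : ℕ → ℝ := fun j => ⨆ x : X, |T j (σ.curry x) x| with hF_def
  have hFbd : ∀ j, BddAbove (Set.range fun x : X => |T j (σ.curry x) x|) := by
    intro j
    exact ⟨ε' * (c⁻¹ * (M + 2 * B j)) + K * B j, by rintro _ ⟨x, rfl⟩; exact hmain j x⟩
  have hFle : ∀ j, F j ≤ ε' * (c⁻¹ * (M + 2 * B j)) + K * B j := fun j =>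
    ciSup_le fun x => hmain j x
  have hFnn : ∀ j, 0 ≤ F j := fun j =>
    le_trans (abs_nonneg _) (le_ciSup (hFbd j) a)
  -- arithmetic: ε' * c⁻¹ * M ≤ ε / 2
  have harith : ε' * (c⁻¹ * M) ≤ ε / 2 := by
    have h1 : c⁻¹ * M = M / c := by rw [div_eq_inv_mul]
    rw [h1, hε'_def]
    rw [div_mul_eq_mul_div, div_le_iff₀ hMc_pos]
    have : M / c ≤ M / c + 1 := by linarith
    nlinarith [hε.le, this]
  set C₂ : ℝ := ε' * c⁻¹ * 2 + K with hC₂_def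
  have hC₂_pos : 0 < C₂ := by
    have h1 : 0 < ε' * c⁻¹ * 2 := by
      have := mul_pos hε'_pos (inv_pos.mpr hc_pos)
      linarith
    rw [hC₂_def]; linarith
  set η₀ : ℝ := ε / (2 * C₂) with hη₀_def
  have hη₀_pos : 0 < η₀ := div_pos hε (by linarith)
  set G : ℝ := ∑ l, ‖g l‖ with hG_def
  have hG_nonneg : 0 ≤ G := Finset.sum_nonneg fun l _ => norm_nonneg _
  set η : ℝ := η₀ / (G + 1) with hη_def
  have hη_pos : 0 < η := div_pos hη₀_pos (by linarith)
  -- subset argument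
  refine P.hasDensity_zero_of_subset_iUnion
    (fun l : Fin d => {j | η ≤ |‖T j (ψ l) - ψ l‖ - 0|})
    (fun l => hTconv l η hη_pos) ?_
  intro j hj
  simp only [Set.mem_setOf_eq] at hj
  have hFj : ε ≤ F j := by
    rwa [sub_zero, abs_of_nonneg (hFnn j)] at hj
  have hBj : η₀ ≤ B j := by
    have h1 := hFle j
    have h2 : ε ≤ ε / 2 + C₂ * B j := by
      have : ε' * (c⁻¹ * (M + 2 * B j)) = ε' * (c⁻¹ * M) + ε' * c⁻¹ * 2 * B j := by ring
      rw [this] at h1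
      have := harith
      rw [hC₂_def]
      nlinarith
    have h4 : ε / 2 ≤ C₂ * B j := by linarith
    rw [hη₀_def, div_le_iff₀ (by linarith : (0:ℝ) < 2 * C₂)]
    calc ε = 2 * (ε / 2) := by ring
      _ ≤ 2 * (C₂ * B j) := by linarith
      _ = B j * (2 * C₂) := by ring
  by_contra hcon
  simp only [Set.mem_iUnion, Set.mem_setOf_eq, not_exists, not_le] at hcon
  have hBlt : B j ≤ G * η := by
    rw [hB_def, hG_def, Finset.sum_mul]
    refine Finset.sum_le_sum fun l _ => ?_
    have := hcon l
    rw [sub_zero, abs_of_nonneg (norm_nonneg _)] at this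
    exact mul_le_mul_of_nonneg_left this.le (norm_nonneg _)
  have : G * η < η₀ := by
    have hpos : 0 < η₀ / (G + 1) := div_pos hη₀_pos (by linarith)
    have h1 : G * (η₀ / (G + 1)) < (G + 1) * (η₀ / (G + 1)) := by nlinarith
    have h2 : (G + 1) * (η₀ / (G + 1)) = η₀ := by field_simp
    rw [hη_def]
    linarith
  linarith
end
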